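/- Let z₁, …, zₙ be distinct complex numbers and let σ₁, …, σₙ be integers satisfying the neutrality condition σ₁ + ⋯ + σₙ = −2, and set λⱼ = σⱼ² + 2σⱼ ∈ ℤ. Let M(z) = (az + b)/(cz + d) be a Möbius transformation with ad − bc = 1 and c·zⱼ + d ≠ 0 for all j. Then, with all powers understood as integer powers of nonzero complex numbers, ∏_{j<k} (M(zⱼ) − M(z_k))^{2σⱼσ_k} = ∏_j (c·zⱼ + d)^{2λⱼ} · ∏_{j<k} (zⱼ − z_k)^{2σⱼσ_k}. In particular, since M′(zⱼ) = (c·zⱼ + d)^{−2}, the normalized Coulomb gas correlation C[𝛔] = ∏_{j<k} (zⱼ − z_k)^{2σⱼσ_k} is exactly Möbius invariant as a differential of conformal dimension λⱼ at zⱼ when all charges are integers. -/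

import Mathlib

open Finset

private lemma zpow_prod_sum {s : Finset α} {x : ℂ} (hx : x ≠ 0) (g : α → ℤ) :
    ∏ i ∈ s, x ^ (g i) = x ^ (∑ i ∈ s, g i) := by
  classical
  induction s using Finset.cons_induction with
  | empty => simp
  | cons a s ha ih => rw [prod_cons, sum_cons, zpow_add₀ hx, ih]

/-- Exact Möbius invariance of the normalized Coulomb gas correlation
for integer charges: with distinct points `z j`, integer charges `σ j` satisfying the
neutrality condition `∑ σ j = -2`, conformal dimensions `lam j = σ j ^ 2 + 2 σ j ∈ ℤ`,
and a normalized Möbius map `M(z) = (a z + b)/(c z + d)`, `a d - b c = 1`, whose pole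
avoids the `z j`, one has (with integer powers of nonzero complex numbers)
`∏_{j<k} (M z_j - M z_k) ^ (2 σ_j σ_k)
  = ∏_j (c z_j + d) ^ (2 lam_j) ⬝ ∏_{j<k} (z_j - z_k) ^ (2 σ_j σ_k)`. -/
theorem coulomb_gas_mobius_invariant_integer_charges (n : ℕ) (z : Fin n → ℂ)
    (hz : Function.Injective z)
    (σ : Fin n → ℤ) (hσ : ∑ j, σ j = -2)
    (lam : Fin n → ℤ) (hlam : ∀ j, lam j = σ j ^ 2 + 2 * σ j)
    (a b c d : ℂ) (habcd : a * d - b * c = 1)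
    (M : ℂ → ℂ) (hM : ∀ w, M w = (a * w + b) / (c * w + d))
    (hden : ∀ j, c * z j + d ≠ 0) :
    ∏ j, ∏ k ∈ Ioi j, (M (z j) - M (z k)) ^ (2 * σ j * σ k) =
      (∏ j, (c * z j + d) ^ (2 * lam j)) *
        ∏ j, ∏ k ∈ Ioi j, (z j - z k) ^ (2 * σ j * σ k) := by
  classical
  set f : Fin n → ℂ := fun j => c * z j + d with hf
  -- key pointwise identity
  have key : ∀ j k, M (z j) - M (z k) = (z j - z k) * (f j)⁻¹ * (f k)⁻¹ := by
    intro j k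
    rw [hM, hM]
    show _ = (z j - z k) * (c * z j + d)⁻¹ * (c * z k + d)⁻¹
    rw [div_sub_div _ _ (hden j) (hden k), mul_assoc, ← mul_inv, ← div_eq_mul_inv]
    congr 1
    linear_combination (z j - z k) * habcd
  have step1 : ∏ j, ∏ k ∈ Ioi j, (M (z j) - M (z k)) ^ (2 * σ j * σ k)
      = (∏ j, ∏ k ∈ Ioi j, ((f k) ^ (-(2 * σ k * σ j)) * (f j) ^ (-(2 * σ j * σ k)))) *
        ∏ j, ∏ k ∈ Ioi j, (z j - z k) ^ (2 * σ j * σ k) := by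
    rw [← prod_mul_distrib]
    refine prod_congr rfl fun j _ => ?_
    rw [← prod_mul_distrib]
    refine prod_congr rfl fun k _ => ?_
    rw [key j k, mul_zpow, mul_zpow, inv_zpow, inv_zpow, ← zpow_neg, ← zpow_neg]
    have : 2 * σ k * σ j = 2 * σ j * σ k := by ring
    rw [this]; ring
  rw [step1]
  congr 1
  rw [prod_prod_Ioi_mul_eq_prod_prod_off_diag
    (f := fun x y => (f x) ^ (-(2 * σ x * σ y)))]
  rw [Finset.prod_comm' (t' := (univ : Finset (Fin n))) (s' := fun y => ({y}ᶜ : Finset (Fin n)))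
    (fun x y => by simp [eq_comm])]
  refine prod_congr rfl fun j _ => ?_
  rw [zpow_prod_sum (hden j)]
  congr 1
  have hsum : ∑ i ∈ ({j}ᶜ : Finset (Fin n)), σ i = -2 - σ j := by
    have := Finset.sum_compl_add_sum ({j} : Finset (Fin n)) σ
    simp only [sum_singleton] at this
    omega
  calc ∑ i ∈ ({j}ᶜ : Finset (Fin n)), -(2 * σ j * σ i)
      = -(2 * σ j * ∑ i ∈ ({j}ᶜ : Finset (Fin n)), σ i) := by
        rw [Finset.mul_sum, Finset.sum_neg_distrib]
    _ = 2 * lam j := by rw [hsum, hlam j]; ring
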